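/- Let P and Q be orthogonal projections onto two lines in ℂ² spanned by unit vectors u and v. The pair (ℂ²; ℂu, ℂv) is unitarily equivalent to (ℂ²; ℂu', ℂv') (via a unitary map carrying one pair of lines to the other) if and only if |⟨u, v⟩| = |⟨u', v'⟩|. -/

import Mathlib

open Module

local notation "E" => EuclideanSpace ℂ (Fin 2)
local notation "⟪" x ", " y "⟫" => @inner ℂ _ _ x y

lemma map_span_singleton (g : E ≃ₗᵢ[ℂ] E) (x : E) :
    (ℂ ∙ x).map (g.toLinearEquiv : E →ₗ[ℂ] E) = ℂ ∙ g x := by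
  rw [Submodule.map_span, Set.image_singleton]; rfl

lemma exists_unitary_pair (u w u' w' : E) (h : Orthonormal ℂ ![u, w])
    (h' : Orthonormal ℂ ![u', w']) : ∃ g : E ≃ₗᵢ[ℂ] E, g u = u' ∧ g w = w' := by
  have hcard : finrank ℂ E = Fintype.card (Fin 2) := by simp
  have h1 : Orthonormal ℂ ((Set.univ : Set (Fin 2)).restrict ![u, w]) :=
    h.comp _ Subtype.val_injective
  have h1' : Orthonormal ℂ ((Set.univ : Set (Fin 2)).restrict ![u', w']) :=
    h'.comp _ Subtype.val_injective
  obtain ⟨b, hb⟩ := h1.exists_orthonormalBasis_extension_of_card_eq hcard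
  obtain ⟨b', hb'⟩ := h1'.exists_orthonormalBasis_extension_of_card_eq hcard
  refine ⟨b.repr.trans b'.repr.symm, ?_, ?_⟩
  · have hu : u = b 0 := by rw [hb 0 (by simp)]; rfl
    have hu' : u' = b' 0 := by rw [hb' 0 (by simp)]; rfl
    rw [hu, hu']
    simp [LinearIsometryEquiv.trans_apply, b.repr_self, b'.repr_symm_single]
  · have hw : w = b 1 := by rw [hb 1 (by simp)]; rfl
    have hw' : w' = b' 1 := by rw [hb' 1 (by simp)]; rfl
    rw [hw, hw']
    simp [LinearIsometryEquiv.trans_apply, b.repr_self, b'.repr_symm_single]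

lemma ortho_pair (u w : E) (hu : ‖u‖ = 1) (hw : ‖w‖ = 1) (huw : ⟪u, w⟫ = 0) :
    Orthonormal ℂ ![u, w] := by
  rw [orthonormal_iff_ite]
  have hwu : ⟪w, u⟫ = 0 := by rw [← inner_conj_symm, huw, map_zero]
  intro i j
  fin_cases i <;> fin_cases j <;>
    simp [inner_self_eq_norm_sq_to_K, hu, hw, huw, hwu]

lemma exists_unitary_single (u u' : E) (hu : ‖u‖ = 1) (hu' : ‖u'‖ = 1) :
    ∃ g : E ≃ₗᵢ[ℂ] E, g u = u' := by
  have hcard : finrank ℂ E = Fintype.card (Fin 2) := by simp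
  have h1 : ∀ x : E, ‖x‖ = 1 →
      Orthonormal ℂ (({0} : Set (Fin 2)).restrict ![x, x]) := by
    intro x hx
    rw [orthonormal_iff_ite]
    rintro ⟨i, hi⟩ ⟨j, hj⟩
    simp only [Set.mem_singleton_iff] at hi hj
    subst hi; subst hj
    simp [inner_self_eq_norm_sq_to_K, hx]
    exact Or.inl hx
  obtain ⟨b, hb⟩ := (h1 u hu).exists_orthonormalBasis_extension_of_card_eq hcard
  obtain ⟨b', hb'⟩ := (h1 u' hu').exists_orthonormalBasis_extension_of_card_eq hcard
  refine ⟨b.repr.trans b'.repr.symm, ?_⟩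
  have h2 : u = b 0 := by rw [hb 0 (by simp)]; rfl
  have h2' : u' = b' 0 := by rw [hb' 0 (by simp)]; rfl
  rw [h2, h2']
  simp [LinearIsometryEquiv.trans_apply, b.repr_self, b'.repr_symm_single]

lemma decomp (u v : E) (hu : ‖u‖ = 1) (hv : ‖v‖ = 1) (hlt : ‖⟪u, v⟫‖ < 1) :
    ∃ w : E, ‖w‖ = 1 ∧ ⟪u, w⟫ = 0 ∧
      (ℂ ∙ v) = ℂ ∙ (((‖⟪u, v⟫‖ : ℝ) : ℂ) • u +
        ((Real.sqrt (1 - ‖⟪u, v⟫‖ ^ 2) : ℝ) : ℂ) • w) := by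
  set α : ℂ := ⟪u, v⟫ with hα
  set c : ℝ := ‖α‖ with hc
  set μ : ℂ := if α = 0 then 1 else (c : ℂ) / α with hμdef
  have hμ : ‖μ‖ = 1 := by
    by_cases h0 : α = 0
    · simp [hμdef, h0]
    · simp only [hμdef, if_neg h0]
      rw [norm_div, Complex.norm_real, Real.norm_eq_abs, abs_norm,
        div_self (norm_ne_zero_iff.2 h0)]
  have hμ0 : μ ≠ 0 := by intro h; rw [h] at hμ; simp at hμ
  have hμα : μ * α = (c : ℂ) := by
    by_cases h0 : α = 0
    · simp [hμdef, h0, hc]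
    · rw [hμdef, if_neg h0]; field_simp
  set v₀ : E := μ • v with hv₀def
  have huv₀ : ⟪u, v₀⟫ = (c : ℂ) := by
    rw [hv₀def, inner_smul_right, ← hα, hμα]
  have hv₀ : ‖v₀‖ = 1 := by rw [hv₀def, norm_smul, hμ, hv, one_mul]
  set s : ℝ := Real.sqrt (1 - c ^ 2) with hs
  have hc0 : 0 ≤ c := norm_nonneg _
  have hpos : 0 < 1 - c ^ 2 := by nlinarith
  have hspos : 0 < s := Real.sqrt_pos.2 hpos
  have hs2 : s ^ 2 = 1 - c ^ 2 := Real.sq_sqrt hpos.le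
  have hv₀u : ⟪v₀, u⟫ = (c : ℂ) := by
    rw [← inner_conj_symm, huv₀, Complex.conj_ofReal]
  have hsub : ‖v₀ - (c : ℂ) • u‖ = s := by
    have h1 : ‖v₀ - (c : ℂ) • u‖ ^ 2 = s ^ 2 := by
      rw [@norm_sub_sq ℂ, inner_smul_right, hv₀u, hv₀, norm_smul, hu]
      simp [Complex.norm_real, abs_of_nonneg hc0, hs2]
      ring
    rw [← Real.sqrt_sq (norm_nonneg _), h1, Real.sqrt_sq hspos.le]
  set w : E := ((s : ℂ))⁻¹ • (v₀ - (c : ℂ) • u) with hwdef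
  have hsC : (s : ℂ) ≠ 0 := by exact_mod_cast hspos.ne'
  have hwnorm : ‖w‖ = 1 := by
    rw [hwdef, norm_smul, hsub, norm_inv, Complex.norm_real, Real.norm_eq_abs,
      abs_of_pos hspos]
    field_simp
  have huw : ⟪u, w⟫ = 0 := by
    rw [hwdef, inner_smul_right, inner_sub_right, huv₀, inner_smul_right,
      inner_self_eq_norm_sq_to_K, hu]
    push_cast
    ring
  have hkey : ((c : ℝ) : ℂ) • u + ((s : ℝ) : ℂ) • w = v₀ := by
    rw [hwdef, smul_smul, mul_inv_cancel₀ hsC, one_smul]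
    abel
  refine ⟨w, hwnorm, huw, ?_⟩
  rw [hkey, hv₀def, Submodule.span_singleton_smul_eq (IsUnit.mk0 μ hμ0)]

theorem stmt_14 (u v u' v' : EuclideanSpace ℂ (Fin 2))
    (hu : ‖u‖ = 1) (hv : ‖v‖ = 1) (hu' : ‖u'‖ = 1) (hv' : ‖v'‖ = 1) :
    (∃ g : EuclideanSpace ℂ (Fin 2) ≃ₗᵢ[ℂ] EuclideanSpace ℂ (Fin 2),
        (ℂ ∙ u).map (g.toLinearEquiv : EuclideanSpace ℂ (Fin 2) →ₗ[ℂ] EuclideanSpace ℂ (Fin 2)) = (ℂ ∙ u') ∧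
        (ℂ ∙ v).map (g.toLinearEquiv : EuclideanSpace ℂ (Fin 2) →ₗ[ℂ] EuclideanSpace ℂ (Fin 2)) = (ℂ ∙ v')) ↔
      ‖(inner ℂ u v : ℂ)‖ = ‖(inner ℂ u' v' : ℂ)‖ := by
  constructor
  · rintro ⟨g, h1, h2⟩
    rw [map_span_singleton] at h1 h2
    have hgu : g u ∈ (ℂ ∙ u' : Submodule ℂ _) := by
      rw [← h1]; exact Submodule.mem_span_singleton_self _
    have hgv : g v ∈ (ℂ ∙ v' : Submodule ℂ _) := by
      rw [← h2]; exact Submodule.mem_span_singleton_self _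
    obtain ⟨a, ha⟩ := Submodule.mem_span_singleton.1 hgu
    obtain ⟨b, hb⟩ := Submodule.mem_span_singleton.1 hgv
    have hna : ‖a‖ = 1 := by
      have : ‖a • u'‖ = ‖u‖ := by rw [ha, g.norm_map]
      rwa [norm_smul, hu', mul_one, hu] at this
    have hnb : ‖b‖ = 1 := by
      have : ‖b • v'‖ = ‖v‖ := by rw [hb, g.norm_map]
      rwa [norm_smul, hv', mul_one, hv] at this
    have key : (inner ℂ u v : ℂ) = (starRingEnd ℂ) a * b * inner ℂ u' v' := by
      rw [← g.inner_map_map u v, ← ha, ← hb, inner_smul_left, inner_smul_right]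
      ring
    rw [key, norm_mul, norm_mul, RCLike.norm_conj, hna, hnb, one_mul, one_mul]
  · intro h
    by_cases hlt : ‖(inner ℂ u v : ℂ)‖ < 1
    · have hlt' : ‖(inner ℂ u' v' : ℂ)‖ < 1 := h ▸ hlt
      obtain ⟨w, hw1, hw2, hw3⟩ := decomp u v hu hv hlt
      obtain ⟨w', hw1', hw2', hw3'⟩ := decomp u' v' hu' hv' hlt'
      obtain ⟨g, hgu, hgw⟩ := exists_unitary_pair u w u' w'
        (ortho_pair u w hu hw1 hw2) (ortho_pair u' w' hu' hw1' hw2')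
      refine ⟨g, ?_, ?_⟩
      · rw [map_span_singleton, hgu]
      · rw [hw3, map_span_singleton, map_add, map_smul, map_smul, hgu, hgw, h, ← hw3']
    · have hle : ‖(inner ℂ u v : ℂ)‖ ≤ 1 := by
        have := norm_inner_le_norm (𝕜 := ℂ) u v
        rwa [hu, hv, mul_one] at this
      have heq : ‖(inner ℂ u v : ℂ)‖ = 1 := le_antisymm hle (not_lt.1 hlt)
      have heq' : ‖(inner ℂ u' v' : ℂ)‖ = 1 := h ▸ heq
      have hu0 : u ≠ 0 := by intro h0; rw [h0, norm_zero] at hu; norm_num at hu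
      have hv0 : v ≠ 0 := by intro h0; rw [h0, norm_zero] at hv; norm_num at hv
      have hu0' : u' ≠ 0 := by intro h0; rw [h0, norm_zero] at hu'; norm_num at hu'
      have hv0' : v' ≠ 0 := by intro h0; rw [h0, norm_zero] at hv'; norm_num at hv'
      obtain ⟨r, hr0, hr⟩ := (norm_inner_eq_norm_iff (𝕜 := ℂ) hu0 hv0).1
        (by rw [heq, hu, hv, mul_one])
      obtain ⟨r', hr0', hr'⟩ := (norm_inner_eq_norm_iff (𝕜 := ℂ) hu0' hv0').1
        (by rw [heq', hu', hv', mul_one])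
      obtain ⟨g, hgu⟩ := exists_unitary_single u u' hu hu'
      refine ⟨g, ?_, ?_⟩
      · rw [map_span_singleton, hgu]
      · rw [hr, hr', Submodule.span_singleton_smul_eq (IsUnit.mk0 r hr0),
          Submodule.span_singleton_smul_eq (IsUnit.mk0 r' hr0'),
          map_span_singleton, hgu]
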